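/- The block graph of an orthogonal array OA(m, n) with 2 ≤ m < n + 1 is strongly regular with parameters (n², m(n−1), (m−1)(m−2) + n − 2, m(m−1)). -/

import Mathlib

/-- An orthogonal array `OA(m, n)`: an `m × n²` array with entries from an `n`-element
set such that for any two distinct rows, the columns restricted to those two rows give
all `n²` ordered pairs. -/
def IsOA (m n : ℕ) (A : Fin m → Fin (n ^ 2) → Fin n) : Prop :=
  ∀ r s : Fin m, r ≠ s → Function.Bijective (fun c => (A r c, A s c))

/-- The block graph of an `m × n²` array: vertices are the columns, two distinct
columns being adjacent when they agree in some row. -/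
def blockGraph {m n : ℕ} (A : Fin m → Fin (n ^ 2) → Fin n) : SimpleGraph (Fin (n ^ 2)) where
  Adj c d := c ≠ d ∧ ∃ r, A r c = A r d
  symm := ⟨fun c d ⟨h, r, hr⟩ => ⟨h.symm, r, hr.symm⟩⟩
  loopless := ⟨fun c ⟨h, _⟩ => h rfl⟩

instance {m n : ℕ} (A : Fin m → Fin (n ^ 2) → Fin n) : DecidableRel (blockGraph A).Adj :=
  fun c d => inferInstanceAs (Decidable (c ≠ d ∧ ∃ r, A r c = A r d))

/-- The block graph of an orthogonal array `OA(m, n)` with `2 ≤ m < n + 1` is strongly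
regular with parameters `(n², m(n−1), (m−1)(m−2) + n − 2, m(m−1))`. -/
lemma row_unique {m n : ℕ} {A : Fin m → Fin (n ^ 2) → Fin n} (hA : IsOA m n A)
    {c d : Fin (n ^ 2)} (hcd : c ≠ d) {r s : Fin m}
    (hr : A r c = A r d) (hs : A s c = A s d) : r = s := by
  by_contra h
  exact hcd ((hA r s h).injective (by simp [hr, hs]))

lemma exists_unique_col {m n : ℕ} {A : Fin m → Fin (n ^ 2) → Fin n} (hA : IsOA m n A)
    {r s : Fin m} (hrs : r ≠ s) (x y : Fin n) :
    ∃! e, A r e = x ∧ A s e = y := by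
  obtain ⟨e, he⟩ := (hA r s hrs).surjective (x, y)
  refine ⟨e, ⟨congrArg Prod.fst he, congrArg Prod.snd he⟩, fun e' ⟨h1, h2⟩ => ?_⟩
  exact (hA r s hrs).injective (by simp only [Prod.mk.injEq] at he ⊢; exact ⟨h1.trans he.1.symm ▸ rfl, by simp [h1, h2, he.1, he.2]⟩)

lemma card_fiber {m n : ℕ} {A : Fin m → Fin (n ^ 2) → Fin n} (hA : IsOA m n A)
    (hm : 2 ≤ m) (r : Fin m) (x : Fin n) :
    (Finset.univ.filter (fun c => A r c = x)).card = n := by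
  have hnt : Nontrivial (Fin m) := ⟨⟨⟨0, by omega⟩, ⟨1, by omega⟩, by simp [Fin.ext_iff]⟩⟩
  obtain ⟨s, hs⟩ := exists_ne r
  have hb := hA r s (Ne.symm hs)
  have key : (Finset.univ.filter (fun c => A r c = x)).card
      = (Finset.univ.filter (fun p : Fin n × Fin n => p.1 = x)).card := by
    apply Finset.card_bij (fun c _ => (A r c, A s c))
    · intro a ha; simp_all
    · intro a _ b _ h; exact hb.injective h
    · intro p hp
      obtain ⟨c, hc⟩ := hb.surjective p
      refine ⟨c, ?_, hc⟩
      simp only [Finset.mem_filter, Finset.mem_univ, true_and] at hp ⊢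
      have : A r c = p.1 := congrArg Prod.fst hc
      rw [this, hp]
  rw [key]
  have : (Finset.univ.filter (fun p : Fin n × Fin n => p.1 = x)) = {x} ×ˢ Finset.univ := by
    ext p
    rw [Finset.mem_product]
    simp
  rw [this]; simp

open Finset in
lemma degree_eq {m n : ℕ} {A : Fin m → Fin (n ^ 2) → Fin n} (hA : IsOA m n A)
    (hm : 2 ≤ m) (c : Fin (n ^ 2)) : (blockGraph A).degree c = m * (n - 1) := by
  rw [show (blockGraph A).degree c = ((blockGraph A).neighborFinset c).card from rfl]
  have hset : (blockGraph A).neighborFinset c =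
      univ.biUnion (fun r => (univ.filter (fun d => A r d = A r c)).erase c) := by
    ext d
    rw [SimpleGraph.mem_neighborFinset]
    simp only [SimpleGraph.mem_neighborFinset, blockGraph, Finset.mem_biUnion, Finset.mem_erase,
      Finset.mem_filter, Finset.mem_univ, true_and]
    constructor
    · rintro ⟨hne, r, hr⟩; exact ⟨r, Ne.symm hne, hr.symm⟩
    · rintro ⟨r, hne, hr⟩; exact ⟨Ne.symm hne, r, hr.symm⟩
  rw [hset, Finset.card_biUnion]
  · have each : ∀ r : Fin m, ((univ.filter (fun d => A r d = A r c)).erase c).card = n - 1 := by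
      intro r
      rw [Finset.card_erase_of_mem (by simp), card_fiber hA hm r (A r c)]
    simp only [each, Finset.sum_const, Finset.card_univ, Fintype.card_fin, smul_eq_mul]
  · intro r _ s _ hrs
    rw [Function.onFun, Finset.disjoint_left]
    rintro d hd hd'
    rw [Finset.mem_erase, Finset.mem_filter] at hd hd'
    exact hrs (row_unique hA hd.1 hd.2.2 hd'.2.2)

lemma mul_self_sub_self (k : ℕ) : k * k - k = k * (k - 1) := by
  cases k with
  | zero => rfl
  | succ j =>
    rw [Nat.succ_sub_one, show (j+1)*(j+1) = (j+1)*j + (j+1) by ring, Nat.add_sub_cancel]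

open Finset in
lemma common_filter {m n : ℕ} (A : Fin m → Fin (n ^ 2) → Fin n) (c d : Fin (n ^ 2)) :
    Fintype.card ((blockGraph A).commonNeighbors c d)
      = (univ.filter (fun e => (blockGraph A).Adj c e ∧ (blockGraph A).Adj d e)).card := by
  rw [← Set.toFinset_card]
  congr 1
  ext e
  simp [SimpleGraph.mem_commonNeighbors]

open Finset in
lemma mu_card {m n : ℕ} {A : Fin m → Fin (n ^ 2) → Fin n} (hA : IsOA m n A)
    {c d : Fin (n ^ 2)} (hcd : c ≠ d) (hnadj : ¬ (blockGraph A).Adj c d) :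
    (univ.filter (fun e => (blockGraph A).Adj c e ∧ (blockGraph A).Adj d e)).card
      = m * (m - 1) := by
  have hrow : ∀ r, A r c ≠ A r d := fun r hr => hnadj ⟨hcd, r, hr⟩
  have key : (univ.offDiag : Finset (Fin m × Fin m)).card
      = (univ.filter (fun e => (blockGraph A).Adj c e ∧ (blockGraph A).Adj d e)).card := by
    apply Finset.card_bij (fun p hp =>
      (exists_unique_col hA (Finset.mem_offDiag.mp hp).2.2 (A p.1 c) (A p.2 d)).choose)
    · intro p hp
      have hspec := (exists_unique_col hA (Finset.mem_offDiag.mp hp).2.2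
        (A p.1 c) (A p.2 d)).choose_spec
      set e := (exists_unique_col hA (Finset.mem_offDiag.mp hp).2.2
        (A p.1 c) (A p.2 d)).choose with he
      obtain ⟨⟨h1, h2⟩, -⟩ := hspec
      have hec : c ≠ e := fun h => hrow p.2 (by rw [← h2, ← h])
      have hed : d ≠ e := fun h => hrow p.1 (by rw [← h1, ← h])
      simp only [Finset.mem_filter, Finset.mem_univ, true_and]
      exact ⟨⟨hec, p.1, h1.symm⟩, ⟨hed, p.2, h2.symm⟩⟩
    · intro p hp q hq h
      have hspecp := (exists_unique_col hA (Finset.mem_offDiag.mp hp).2.2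
        (A p.1 c) (A p.2 d)).choose_spec
      have hspecq := (exists_unique_col hA (Finset.mem_offDiag.mp hq).2.2
        (A q.1 c) (A q.2 d)).choose_spec
      rw [← h] at hspecq
      obtain ⟨⟨hp1, hp2⟩, -⟩ := hspecp
      obtain ⟨⟨hq1, hq2⟩, -⟩ := hspecq
      set e := (exists_unique_col hA (Finset.mem_offDiag.mp hp).2.2
        (A p.1 c) (A p.2 d)).choose with he
      have hec : e ≠ c := fun h => hrow p.2 (by rw [← hp2, h])
      have hed : e ≠ d := fun h => hrow p.1 (by rw [← hp1, h])
      exact Prod.ext (row_unique hA hec hp1 hq1) (row_unique hA hed hp2 hq2)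
    · intro e he
      simp only [Finset.mem_filter, Finset.mem_univ, true_and] at he
      obtain ⟨⟨hce, r, hr⟩, hde, s, hs⟩ := he
      have hrs : r ≠ s := by
        intro h
        exact hrow r (hr.trans (by rw [h, ← hs]))
      have hmem : (r, s) ∈ (univ.offDiag : Finset (Fin m × Fin m)) :=
        Finset.mem_offDiag.mpr ⟨mem_univ _, mem_univ _, hrs⟩
      refine ⟨(r, s), hmem, ?_⟩
      have hspec := (exists_unique_col hA (Finset.mem_offDiag.mp hmem).2.2
        (A r c) (A s d)).choose_spec
      exact (hspec.2 e ⟨hr.symm, hs.symm⟩).symm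
  rw [← key, Finset.offDiag_card, Finset.card_univ, Fintype.card_fin, mul_self_sub_self]

open Finset in
lemma lambda_card {m n : ℕ} {A : Fin m → Fin (n ^ 2) → Fin n} (hA : IsOA m n A)
    (hm : 2 ≤ m) (hn : 2 ≤ n) {c d : Fin (n ^ 2)} (hadj : (blockGraph A).Adj c d) :
    (univ.filter (fun e => (blockGraph A).Adj c e ∧ (blockGraph A).Adj d e)).card
      = (m - 1) * (m - 2) + n - 2 := by
  obtain ⟨hcd, r₀, hr₀⟩ := hadj
  have huniq : ∀ r, A r c = A r d → r = r₀ := fun r hr => row_unique hA hcd hr hr₀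
  set T := univ.filter (fun e => (blockGraph A).Adj c e ∧ (blockGraph A).Adj d e) with hT
  have hsplit := Finset.card_filter_add_card_filter_not
    (s := T) (p := fun e => A r₀ e = A r₀ c)
  have h1 : (T.filter (fun e => A r₀ e = A r₀ c)).card = n - 2 := by
    have heq : (T.filter (fun e => A r₀ e = A r₀ c)) =
        ((univ.filter (fun e => A r₀ e = A r₀ c)).erase d).erase c := by
      ext e
      simp only [hT, Finset.mem_filter, Finset.mem_univ, true_and, Finset.mem_erase]
      constructor
      · rintro ⟨⟨⟨hce, -⟩, hde, -⟩, hre⟩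
        exact ⟨Ne.symm hce, Ne.symm hde, hre⟩
      · rintro ⟨hec, hed, hre⟩
        exact ⟨⟨⟨Ne.symm hec, r₀, hre.symm⟩, ⟨Ne.symm hed, r₀, by rw [← hr₀, hre]⟩⟩, hre⟩
    rw [heq, Finset.card_erase_of_mem (by
        rw [Finset.mem_erase]
        exact ⟨hcd, by simp⟩),
      Finset.card_erase_of_mem (by simp [hr₀.symm]),
      card_fiber hA hm r₀ (A r₀ c)]
    omega
  have h2 : (T.filter (fun e => ¬ A r₀ e = A r₀ c)).card = (m - 1) * (m - 2) := by
    have key : ((univ.erase r₀).offDiag : Finset (Fin m × Fin m)).card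
        = (T.filter (fun e => ¬ A r₀ e = A r₀ c)).card := by
      apply Finset.card_bij (fun p hp =>
        (exists_unique_col hA (Finset.mem_offDiag.mp hp).2.2 (A p.1 c) (A p.2 d)).choose)
      · intro p hp
        obtain ⟨hp1, hp2, hp12⟩ := Finset.mem_offDiag.mp hp
        have hpr1 : p.1 ≠ r₀ := (Finset.mem_erase.mp hp1).1
        have hpr2 : p.2 ≠ r₀ := (Finset.mem_erase.mp hp2).1
        have hspec := (exists_unique_col hA (Finset.mem_offDiag.mp hp).2.2
          (A p.1 c) (A p.2 d)).choose_spec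
        set e := (exists_unique_col hA (Finset.mem_offDiag.mp hp).2.2
          (A p.1 c) (A p.2 d)).choose with he
        obtain ⟨⟨ha1, ha2⟩, -⟩ := hspec
        have hec : e ≠ c := fun h => hpr2 (huniq p.2 (by rw [← h, ha2]))
        have hed : e ≠ d := fun h => hpr1 (huniq p.1 (by rw [← ha1, h]))
        have hnot : ¬ A r₀ e = A r₀ c := fun h =>
          hpr1 (row_unique hA hec ha1 h)
        simp only [hT, Finset.mem_filter, Finset.mem_univ, true_and]
        exact ⟨⟨⟨Ne.symm hec, p.1, ha1.symm⟩, ⟨Ne.symm hed, p.2, ha2.symm⟩⟩, hnot⟩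
      · intro p hp q hq h
        obtain ⟨hp1, hp2, -⟩ := Finset.mem_offDiag.mp hp
        have hpr1 : p.1 ≠ r₀ := (Finset.mem_erase.mp hp1).1
        have hpr2 : p.2 ≠ r₀ := (Finset.mem_erase.mp hp2).1
        have hspecp := (exists_unique_col hA (Finset.mem_offDiag.mp hp).2.2
          (A p.1 c) (A p.2 d)).choose_spec
        have hspecq := (exists_unique_col hA (Finset.mem_offDiag.mp hq).2.2
          (A q.1 c) (A q.2 d)).choose_spec
        rw [← h] at hspecq
        obtain ⟨⟨ha1, ha2⟩, -⟩ := hspecp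
        obtain ⟨⟨hb1, hb2⟩, -⟩ := hspecq
        set e := (exists_unique_col hA (Finset.mem_offDiag.mp hp).2.2
          (A p.1 c) (A p.2 d)).choose with he
        have hec : e ≠ c := fun hh => hpr2 (huniq p.2 (by rw [← hh, ha2]))
        have hed : e ≠ d := fun hh => hpr1 (huniq p.1 (by rw [← ha1, hh]))
        exact Prod.ext (row_unique hA hec ha1 hb1) (row_unique hA hed ha2 hb2)
      · intro e he
        simp only [hT, Finset.mem_filter, Finset.mem_univ, true_and] at he
        obtain ⟨⟨⟨hce, r, hr⟩, hde, s, hs⟩, hnot⟩ := he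
        have hrr0 : r ≠ r₀ := fun h => hnot (by rw [← h, ← hr])
        have hsr0 : s ≠ r₀ := fun h => hnot (by subst h; rw [← hs, ← hr₀])
        have hrs : r ≠ s := fun h => hrr0 (huniq r (hr.trans (by rw [h, ← hs])))
        have hmem : (r, s) ∈ ((univ.erase r₀).offDiag : Finset (Fin m × Fin m)) :=
          Finset.mem_offDiag.mpr ⟨Finset.mem_erase.mpr ⟨hrr0, mem_univ _⟩,
            Finset.mem_erase.mpr ⟨hsr0, mem_univ _⟩, hrs⟩
        refine ⟨(r, s), hmem, ?_⟩
        have hspec := (exists_unique_col hA (Finset.mem_offDiag.mp hmem).2.2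
          (A r c) (A s d)).choose_spec
        exact (hspec.2 e ⟨hr.symm, hs.symm⟩).symm
    rw [← key, Finset.offDiag_card, Finset.card_erase_of_mem (mem_univ r₀),
      Finset.card_univ, Fintype.card_fin, mul_self_sub_self, Nat.sub_sub]
  rw [← hsplit, h1, h2]
  generalize (m - 1) * (m - 2) = k
  omega

theorem blockGraph_isSRG (m n : ℕ) (hm : 2 ≤ m) (hmn : m < n + 1)
    (A : Fin m → Fin (n ^ 2) → Fin n) (hA : IsOA m n A) :
    (blockGraph A).IsSRGWith (n ^ 2) (m * (n - 1)) ((m - 1) * (m - 2) + n - 2) (m * (m - 1)) := by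
  have hn : 2 ≤ n := by omega
  refine ⟨by simp, fun v => degree_eq hA hm v, fun v w h => ?_, fun v w hne h => ?_⟩
  · rw [common_filter]; exact lambda_card hA hm hn h
  · rw [common_filter]; exact mu_card hA hne h
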